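/- Let T be a real symmetric tridiagonal n×n matrix and s ∈ ℝ such that T − sI is almost invertible and det(T − sI) = 0. Then the signed shifted QR step F_s(T) satisfies (F_s(T))_{n,n−1} = 0 and (F_s(T))_{n,n} = s. -/

import Mathlib

open Matrix Filter Topology

attribute [local instance] Matrix.normedAddCommGroup Matrix.normedSpace

noncomputable section

attribute [local instance] Classical.propDecidable

/-- The first `n+1` columns of the `(n+2)×(n+2)` matrix `M` are linearly independent,
i.e. `M` is *almost invertible*. -/
def AlmostInv {n : ℕ} (M : Matrix (Fin (n+2)) (Fin (n+2)) ℝ) : Prop :=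
  LinearIndependent ℝ (fun j : Fin (n+1) => fun i => M i j.castSucc)

/-- `M = Q⋆ R⋆` with `Q⋆` orthogonal of determinant one and `R⋆` upper triangular
with positive diagonal except possibly at the last entry. -/
def IsQsRs {n : ℕ} (M Q R : Matrix (Fin (n+2)) (Fin (n+2)) ℝ) : Prop :=
  Qᵀ * Q = 1 ∧ Q.det = 1 ∧ (∀ i j : Fin (n+2), j < i → R i j = 0) ∧
    (∀ i : Fin (n+1), 0 < R i.castSucc i.castSucc) ∧ M = Q * R

/-- `M = Q R` with `Q` orthogonal and `R` upper triangular with positive diagonal. -/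
def IsQR {n : ℕ} (M Q R : Matrix (Fin (n+2)) (Fin (n+2)) ℝ) : Prop :=
  Qᵀ * Q = 1 ∧ (∀ i j : Fin (n+2), j < i → R i j = 0) ∧
    (∀ i : Fin (n+2), 0 < R i i) ∧ M = Q * R

/-- `E_n = diag(1, …, 1, -1)`. -/
def En (n : ℕ) : Matrix (Fin (n+2)) (Fin (n+2)) ℝ :=
  Matrix.diagonal (fun i => if i = Fin.last (n+1) then -1 else 1)

/-- The signed shifted QR step `F_s(T) = Q⋆ᵀ T Q⋆` where `T - s I = Q⋆ R⋆`. -/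
def Fs {n : ℕ} (s : ℝ) (T : Matrix (Fin (n+2)) (Fin (n+2)) ℝ) :
    Matrix (Fin (n+2)) (Fin (n+2)) ℝ :=
  if h : ∃ Q R, IsQsRs (T - s • 1) Q R then (h.choose)ᵀ * T * h.choose else 0

/-- The (plain) shifted QR step `Φ(T, s) = Qᵀ T Q` where `T - s I = Q R`. -/
def Phi {n : ℕ} (T : Matrix (Fin (n+2)) (Fin (n+2)) ℝ) (s : ℝ) :
    Matrix (Fin (n+2)) (Fin (n+2)) ℝ :=
  if h : ∃ Q R, IsQR (T - s • 1) Q R then (h.choose)ᵀ * T * h.choose else 0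

/-- `T` is symmetric and tridiagonal. -/
def SymTridiag {n : ℕ} (T : Matrix (Fin (n+2)) (Fin (n+2)) ℝ) : Prop :=
  Tᵀ = T ∧ ∀ i j : Fin (n+2), (i.val + 1 < j.val ∨ j.val + 1 < i.val) → T i j = 0

/-- `b(T)`, the lowest subdiagonal entry `T_{n, n-1}` (1-based). -/
def lowb {n : ℕ} (T : Matrix (Fin (n+2)) (Fin (n+2)) ℝ) : ℝ :=
  T (Fin.last (n+1)) ⟨n, by omega⟩

/-- `T` is unreduced: all subdiagonal entries are nonzero. -/
def Unreduced {n : ℕ} (T : Matrix (Fin (n+2)) (Fin (n+2)) ℝ) : Prop :=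
  ∀ i : Fin (n+1), T i.succ i.castSucc ≠ 0

/-- `𝒯_Λ`: real symmetric tridiagonal matrices with the same characteristic polynomial
as `Λ = diagonal lam`. -/
def TSet {n : ℕ} (lam : Fin (n+2) → ℝ) : Set (Matrix (Fin (n+2)) (Fin (n+2)) ℝ) :=
  {T | SymTridiag T ∧ T.charpoly = (Matrix.diagonal lam).charpoly}

/-- The deflation neighborhood `D^i_{Λ,ε}`. -/
def Dset {n : ℕ} (lam : Fin (n+2) → ℝ) (ε : ℝ) (i : Fin (n+2)) :
    Set (Matrix (Fin (n+2)) (Fin (n+2)) ℝ) :=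
  {T ∈ TSet lam | |lowb T| ≤ ε ∧
    |T (Fin.last (n+1)) (Fin.last (n+1)) - lam i| ≤ Real.sqrt 2 * ε}

/-- The deflation set `D^i_{Λ,0}`. -/
def D0 {n : ℕ} (lam : Fin (n+2) → ℝ) (i : Fin (n+2)) :
    Set (Matrix (Fin (n+2)) (Fin (n+2)) ℝ) :=
  {T ∈ TSet lam | lowb T = 0 ∧ T (Fin.last (n+1)) (Fin.last (n+1)) = lam i}

/-- The deflation domain `D^i_Λ`: matrices `T ∈ 𝒯_Λ` with `T - λ_i I` almost invertible. -/
def DD {n : ℕ} (lam : Fin (n+2) → ℝ) (i : Fin (n+2)) :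
    Set (Matrix (Fin (n+2)) (Fin (n+2)) ℝ) :=
  {T ∈ TSet lam | AlmostInv (T - lam i • 1)}

/-- A simple shift strategy. -/
def SimpleShift {n : ℕ} (lam : Fin (n+2) → ℝ)
    (σ : Matrix (Fin (n+2)) (Fin (n+2)) ℝ → ℝ) : Prop :=
  (∀ T ∈ TSet lam, σ (En n * T * En n) = σ T) ∧
  ∃ C > 0, ∀ T ∈ TSet lam, ∃ i : Fin (n+2), |σ T - lam i| ≤ C * |lowb T|

/-- The vector space of real symmetric tridiagonal matrices. -/
def STSpace (n : ℕ) : Submodule ℝ (Matrix (Fin (n+2)) (Fin (n+2)) ℝ) where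
  carrier := {T | SymTridiag T}
  add_mem' := by
    rintro a b ⟨ha1, ha2⟩ ⟨hb1, hb2⟩
    refine ⟨by rw [Matrix.transpose_add, ha1, hb1], fun i j h => ?_⟩
    simp [Matrix.add_apply, ha2 i j h, hb2 i j h]
  zero_mem' := ⟨Matrix.transpose_zero, fun i j _ => rfl⟩
  smul_mem' := by
    rintro c a ⟨ha1, ha2⟩
    refine ⟨by rw [Matrix.transpose_smul, ha1], fun i j h => ?_⟩
    simp [Matrix.smul_apply, ha2 i j h]

/-- `σ` is smooth near `A ⊆ 𝒯_Λ`: there are an open subset `U` of the vector space of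
symmetric tridiagonal matrices containing `A` and a `C^∞` function on `U` agreeing with
`σ` on `U ∩ 𝒯_Λ`. -/
def SmoothNear {n : ℕ} (lam : Fin (n+2) → ℝ)
    (σ : Matrix (Fin (n+2)) (Fin (n+2)) ℝ → ℝ)
    (A : Set (Matrix (Fin (n+2)) (Fin (n+2)) ℝ)) : Prop :=
  ∃ (U : Set (STSpace n)) (σt : STSpace n → ℝ),
    IsOpen U ∧
    (∀ T : STSpace n, (T : Matrix (Fin (n+2)) (Fin (n+2)) ℝ) ∈ A → T ∈ U) ∧
    ContDiffOn ℝ (⊤ : ℕ∞) σt U ∧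
    ∀ T : STSpace n, T ∈ U → (T : Matrix (Fin (n+2)) (Fin (n+2)) ℝ) ∈ TSet lam →
      σt T = σ (T : Matrix (Fin (n+2)) (Fin (n+2)) ℝ)

/-- The Frobenius norm `‖A‖ = √(trace(Aᵀ A))`. -/
def frobNorm {n : ℕ} (A : Matrix (Fin (n+2)) (Fin (n+2)) ℝ) : ℝ :=
  Real.sqrt (Matrix.trace (Aᵀ * A))

end

open scoped InnerProductSpace in
open InnerProductSpace in
lemma exists_isQsRs {n : ℕ} (M : Matrix (Fin (n+2)) (Fin (n+2)) ℝ) (hai : AlmostInv M) :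
    ∃ Q R, IsQsRs M Q R := by
  classical
  haveI : WellFoundedLT (Fin (n+2)) := inferInstance
  have hcard : Module.finrank ℝ (EuclideanSpace ℝ (Fin (n+2))) = Fintype.card (Fin (n+2)) := by
    simp
  set f : Fin (n+2) → EuclideanSpace ℝ (Fin (n+2)) := fun j => WithLp.toLp 2 (fun i => M i j) with hfdef
  set b := gramSchmidtOrthonormalBasis hcard f with hbdef
  have hinner : ∀ (x y : EuclideanSpace ℝ (Fin (n+2))), ⟪x, y⟫_ℝ = ∑ k, x k * y k := by
    intro x y
    simp [PiLp.inner_apply, RCLike.inner_apply, conj_trivial, mul_comm]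
  set Q0 : Matrix (Fin (n+2)) (Fin (n+2)) ℝ := fun i j => b j i with hQ0def
  have hQ0orth : Q0ᵀ * Q0 = 1 := by
    ext i j
    have h2 : ⟪(b i : EuclideanSpace ℝ (Fin (n+2))), b j⟫_ℝ = if i = j then 1 else 0 :=
      orthonormal_iff_ite.mp b.orthonormal i j
    rw [hinner] at h2
    rw [Matrix.mul_apply, Matrix.one_apply]
    exact h2
  have hR0 : ∀ i j, (Q0ᵀ * M) i j = ⟪(b i : EuclideanSpace ℝ (Fin (n+2))), f j⟫_ℝ := by
    intro i j
    rw [hinner]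
    simp only [Matrix.mul_apply, Matrix.transpose_apply]
    rfl
  have htri0 : ∀ i j : Fin (n+2), j < i → (Q0ᵀ * M) i j = 0 := by
    intro i j hij
    rw [hR0]
    exact gramSchmidtOrthonormalBasis_inv_triangular hcard f hij
  have hpos0 : ∀ i : Fin (n+1), 0 < (Q0ᵀ * M) i.castSucc i.castSucc := by
    intro i
    set c := i.castSucc with hcdef
    have hilt := i.isLt
    set φ : Set.Iic c → Fin (n+1) := fun j =>
      ⟨(j : Fin (n+2)).1, by
        have h : ((j : Fin (n+2)) : ℕ) ≤ (i : ℕ) := by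
          simpa [hcdef] using Fin.le_def.mp j.2
        omega⟩ with hφdef
    have hφinj : Function.Injective φ := by
      intro a b hab
      ext
      simpa [hφdef, Fin.ext_iff] using hab
    have hai' : LinearIndependent ℝ (fun j : Fin (n+1) => (f j.castSucc)) :=
      hai.map' (WithLp.linearEquiv 2 ℝ (Fin (n+2) → ℝ)).symm.toLinearMap
        (WithLp.linearEquiv 2 ℝ (Fin (n+2) → ℝ)).symm.ker
    have hli : LinearIndependent ℝ (f ∘ ((↑) : Set.Iic c → Fin (n+2))) :=
      hai'.comp φ hφinj
    have hne : gramSchmidt ℝ f c ≠ 0 := gramSchmidt_ne_zero_coe c hli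
    have hnpos : 0 < ‖gramSchmidt ℝ f c‖ := norm_pos_iff.mpr hne
    have hnormed_ne : gramSchmidtNormed ℝ f c ≠ 0 := by
      rw [gramSchmidtNormed]
      exact smul_ne_zero (by positivity) hne
    have hb : b c = gramSchmidtNormed ℝ f c := gramSchmidtOrthonormalBasis_apply hcard hnormed_ne
    have hkey : ⟪gramSchmidt ℝ f c, f c⟫_ℝ = ‖gramSchmidt ℝ f c‖ ^ 2 := by
      conv_lhs => rw [gramSchmidt_def' ℝ f c]
      rw [inner_add_right, inner_sum, Finset.sum_eq_zero, add_zero,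
        real_inner_self_eq_norm_sq]
      intro k hk
      have hkc : c ≠ k := (Finset.mem_Iio.mp hk).ne'
      simp [Submodule.starProjection_singleton, inner_smul_right,
        gramSchmidt_orthogonal ℝ f hkc]
    rw [hR0, hb, gramSchmidtNormed, real_inner_smul_left, hkey]
    simp only [RCLike.ofReal_real_eq_id, id_eq, conj_trivial]
    rw [pow_two, ← mul_assoc, inv_mul_cancel₀ (ne_of_gt hnpos), one_mul]
    exact hnpos
  have hQ0Q0 : Q0 * Q0ᵀ = 1 := mul_eq_one_comm.mp hQ0orth
  set d := Q0.det with hddef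
  have hd2 : d * d = 1 := by
    have : (Q0ᵀ * Q0).det = (1 : Matrix (Fin (n+2)) (Fin (n+2)) ℝ).det := by rw [hQ0orth]
    rwa [Matrix.det_mul, Matrix.det_transpose, Matrix.det_one, ← hddef] at this
  set D : Matrix (Fin (n+2)) (Fin (n+2)) ℝ :=
    Matrix.diagonal (fun k => if k = Fin.last (n+1) then d else 1) with hDdef
  have hDT : Dᵀ = D := Matrix.diagonal_transpose _
  have hDD : D * D = 1 := by
    rw [hDdef, Matrix.diagonal_mul_diagonal]
    ext i j
    by_cases hij : i = j
    · subst hij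
      by_cases hk : i = Fin.last (n+1) <;>
        simp [Matrix.diagonal_apply_eq, Matrix.one_apply, hk, hd2]
    · simp [Matrix.diagonal_apply_ne _ hij, Matrix.one_apply, hij]
  have hdetD : D.det = d := by
    rw [hDdef, Matrix.det_diagonal]
    simp [Finset.prod_ite_eq' Finset.univ (Fin.last (n+1))]
  refine ⟨Q0 * D, D * (Q0ᵀ * M), ?_, ?_, ?_, ?_, ?_⟩
  · rw [Matrix.transpose_mul, hDT, Matrix.mul_assoc, ← Matrix.mul_assoc Q0ᵀ Q0 D, hQ0orth,
      Matrix.one_mul, hDD]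
  · rw [Matrix.det_mul, hdetD, ← hddef, hd2]
  · intro i j hij
    rw [hDdef, Matrix.diagonal_mul]
    rw [htri0 i j hij, mul_zero]
  · intro i
    rw [hDdef, Matrix.diagonal_mul]
    have : i.castSucc ≠ Fin.last (n+1) := Fin.ne_of_lt (Fin.castSucc_lt_last i)
    rw [if_neg this, one_mul]
    exact hpos0 i
  · rw [Matrix.mul_assoc, ← Matrix.mul_assoc D D, hDD, Matrix.one_mul, ← Matrix.mul_assoc,
      hQ0Q0, Matrix.one_mul]


theorem stmt2 (n : ℕ) (T : Matrix (Fin (n+2)) (Fin (n+2)) ℝ) (s : ℝ)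
    (hT : SymTridiag T) (hai : AlmostInv (T - s • 1))
    (hdet : (T - s • (1 : Matrix (Fin (n+2)) (Fin (n+2)) ℝ)).det = 0) :
    lowb (Fs s T) = 0 ∧ Fs s T (Fin.last (n+1)) (Fin.last (n+1)) = s := by
  classical
  have hex : ∃ Q R, IsQsRs (T - s • 1) Q R := exists_isQsRs _ hai
  set Q := hex.choose with hQdef
  set R := hex.choose_spec.choose with hRdef
  obtain ⟨hQo, hQdet1, htri, hposR, hQR⟩ := hex.choose_spec.choose_spec
  have hFs : Fs s T = Qᵀ * T * Q := by
    rw [Fs, dif_pos hex]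
  have hRdet : R.det = 0 := by
    have h1 : (T - s • (1 : Matrix (Fin (n+2)) (Fin (n+2)) ℝ)).det = Q.det * R.det := by
      rw [hQR, Matrix.det_mul]
    rw [hdet, hQdet1, one_mul] at h1
    exact h1.symm
  have hprodpos : 0 < ∏ i : Fin (n+1), R i.castSucc i.castSucc :=
    Finset.prod_pos (fun i _ => hposR i)
  have hdetprod : R.det =
      (∏ i : Fin (n+1), R i.castSucc i.castSucc) * R (Fin.last (n+1)) (Fin.last (n+1)) := by
    rw [Matrix.det_of_upperTriangular (fun i j h => htri i j h), Fin.prod_univ_castSucc]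
  have hlastlast : R (Fin.last (n+1)) (Fin.last (n+1)) = 0 :=
    (mul_eq_zero.mp (hdetprod ▸ hRdet)).resolve_left (ne_of_gt hprodpos)
  have hrow : ∀ j, R (Fin.last (n+1)) j = 0 := by
    intro j
    rcases (Fin.le_last j).lt_or_eq with h | h
    · exact htri _ j h
    · rw [h]; exact hlastlast
  have hTeq : T = Q * R + s • (1 : Matrix (Fin (n+2)) (Fin (n+2)) ℝ) := by
    rw [← hQR]
    abel
  have hFs2 : Fs s T = R * Q + s • (1 : Matrix (Fin (n+2)) (Fin (n+2)) ℝ) := by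
    rw [hFs, hTeq]
    rw [Matrix.mul_add, Matrix.add_mul, Matrix.mul_smul, Matrix.smul_mul, Matrix.mul_one,
      ← Matrix.mul_assoc Qᵀ Q R, hQo, Matrix.one_mul]
  have hone : ∀ j, Fs s T (Fin.last (n+1)) j =
      s * (if Fin.last (n+1) = j then 1 else 0) := by
    intro j
    rw [hFs2, Matrix.add_apply, Matrix.smul_apply, Matrix.one_apply, Matrix.mul_apply,
      Finset.sum_eq_zero (fun k _ => by rw [hrow k, zero_mul]), zero_add, smul_eq_mul]
  constructor
  · have hne : Fin.last (n+1) ≠ (⟨n, by omega⟩ : Fin (n+2)) := by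
      intro hcontra
      have := congrArg Fin.val hcontra
      simp only [Fin.val_last] at this
      omega
    simp only [lowb]
    rw [hone, if_neg hne, mul_zero]
  · rw [hone, if_pos rfl, mul_one]
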